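/- Suppose P̄(X,Y,Z,W) = 0 for all X,Y,Z,W ∈ V with a ≠ 0, b ≠ 0 and a + (n−1)b ≠ 0. Then R̄ has constant sectional-curvature form: R̄(X,Y,Z,W) = (r/(n(n−1)))[g(Y,Z)g(X,W) − g(X,Z)g(Y,W)] for all X,Y,Z,W ∈ V. -/

import Mathlib

open scoped RealInnerProductSpace

theorem stmt16
    {V : Type*} [NormedAddCommGroup V] [InnerProductSpace ℝ V]
    (n : ℕ) (hn : 3 < n)
    (e : Module.Basis (Fin n) ℝ V) (he : Orthonormal ℝ e)
    (Rb : V → V → V → V → ℝ)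
    (hlin1 : ∀ (c : ℝ) (X X' Y Z W : V),
      Rb (c • X + X') Y Z W = c * Rb X Y Z W + Rb X' Y Z W)
    (hlin2 : ∀ (c : ℝ) (X Y Y' Z W : V),
      Rb X (c • Y + Y') Z W = c * Rb X Y Z W + Rb X Y' Z W)
    (hlin3 : ∀ (c : ℝ) (X Y Z Z' W : V),
      Rb X Y (c • Z + Z') W = c * Rb X Y Z W + Rb X Y Z' W)
    (hlin4 : ∀ (c : ℝ) (X Y Z W W' : V),
      Rb X Y Z (c • W + W') = c * Rb X Y Z W + Rb X Y Z W')
    (hskew1 : ∀ X Y Z W : V, Rb X Y Z W = - Rb Y X Z W)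
    (hskew2 : ∀ X Y Z W : V, Rb X Y Z W = - Rb X Y W Z)
    (hpair : ∀ X Y Z W : V, Rb X Y Z W = Rb Z W X Y)
    (S : V → V → ℝ) (hS : ∀ Y Z : V, S Y Z = ∑ i, Rb (e i) Y Z (e i))
    (r : ℝ) (hr : r = ∑ i, S (e i) (e i))
    (a b : ℝ)
    (Pb : V → V → V → V → ℝ)
    (hP : ∀ X Y Z W : V, Pb X Y Z W =
      a * Rb X Y Z W
      + b * (S Y Z * ⟪X, W⟫ - S X Z * ⟪Y, W⟫)
      - (r / n) * (a / ((n : ℝ) - 1) + b)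
        * (⟪Y, Z⟫ * ⟪X, W⟫ - ⟪X, Z⟫ * ⟪Y, W⟫))
    (ha : a ≠ 0) (hb : b ≠ 0) (hab : a + ((n : ℝ) - 1) * b ≠ 0)
    (hflat : ∀ X Y Z W : V, Pb X Y Z W = 0) :
    ∀ X Y Z W : V, Rb X Y Z W =
      (r / ((n : ℝ) * ((n : ℝ) - 1)))
        * (⟪Y, Z⟫ * ⟪X, W⟫ - ⟪X, Z⟫ * ⟪Y, W⟫) := by
  have hn4 : (4:ℝ) ≤ (n:ℝ) := by exact_mod_cast hn
  have hn0 : (n:ℝ) ≠ 0 := by linarith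
  have hn1 : (n:ℝ) - 1 ≠ 0 := by linarith
  classical
  -- inner products of basis vectors
  have hee : ∀ i j : Fin n, ⟪e i, e j⟫ = if i = j then (1:ℝ) else 0 :=
    fun i j => orthonormal_iff_ite.mp he i j
  have e2 : ∑ i, ⟪e i, e i⟫ = (n:ℝ) := by
    simp only [hee]; simp
  -- zero and linearity in slot 2
  have hzero2 : ∀ X Z W : V, Rb X 0 Z W = 0 := by
    intro X Z W
    have h := hlin2 1 X 0 0 Z W
    simp at h
    linarith
  have hsmul2 : ∀ (c : ℝ) (X Y Z W : V), Rb X (c • Y) Z W = c * Rb X Y Z W := by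
    intro c X Y Z W
    have h := hlin2 c X Y 0 Z W
    simpa [hzero2] using h
  have hadd2 : ∀ X Y Y' Z W : V, Rb X (Y + Y') Z W = Rb X Y Z W + Rb X Y' Z W := by
    intro X Y Y' Z W
    have h := hlin2 1 X Y Y' Z W
    simpa using h
  have hsum2 : ∀ (X Z W : V) (f : Fin n → ℝ),
      Rb X (∑ i, f i • e i) Z W = ∑ i, f i * Rb X (e i) Z W := by
    intro X Z W f
    have key : ∀ s : Finset (Fin n),
        Rb X (∑ i ∈ s, f i • e i) Z W = ∑ i ∈ s, f i * Rb X (e i) Z W := by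
      intro s
      induction s using Finset.induction with
      | empty => simp [hzero2]
      | insert _ _ h ih =>
          rw [Finset.sum_insert h, hadd2, hsmul2, ih, Finset.sum_insert h]
    exact key _
  -- expansion in the basis
  have hexp : ∀ Y : V, ∑ i, ⟪e i, Y⟫ • e i = Y := by
    intro Y
    have h1 : ∀ i, ⟪e i, Y⟫ = e.repr Y i := by
      intro i
      conv_lhs => rw [← e.sum_repr Y]
      exact he.inner_right_fintype (e.repr Y) i
    simp_rw [h1]
    exact e.sum_repr Y
  have e3 : ∀ Y Z : V, ∑ i, ⟪e i, Z⟫ * ⟪Y, e i⟫ = ⟪Y, Z⟫ := by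
    intro Y Z
    conv_rhs => rw [← hexp Z]
    rw [inner_sum]
    exact Finset.sum_congr rfl fun i _ => (real_inner_smul_right _ _ _).symm
  have e4 : ∀ Y Z : V, ∑ i, S (e i) Z * ⟪Y, e i⟫ = S Y Z := by
    intro Y Z
    have : S Y Z = ∑ j, Rb (e j) (∑ i, ⟪e i, Y⟫ • e i) Z (e j) := by
      rw [hS]; congr 1; ext j; rw [hexp]
    rw [this]
    simp_rw [hsum2]
    rw [Finset.sum_comm]
    congr 1; ext i
    rw [hS]
    rw [Finset.sum_mul]
    congr 1; ext j
    rw [real_inner_comm Y (e i)]; ring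
  -- contraction: S Y Z = (r/n) ⟪Y,Z⟫
  have hS0 : ∀ Y Z : V, S Y Z = (r / n) * ⟪Y, Z⟫ := by
    intro Y Z
    have h0 : ∑ i, Pb (e i) Y Z (e i) = 0 := by simp [hflat]
    have hsum : ∑ i, Pb (e i) Y Z (e i) =
        a * S Y Z + b * (S Y Z * (n:ℝ) - S Y Z)
          - (r / n) * (a / ((n:ℝ) - 1) + b) * (⟪Y, Z⟫ * (n:ℝ) - ⟪Y, Z⟫) := by
      have : ∀ i : Fin n, Pb (e i) Y Z (e i) =
          a * Rb (e i) Y Z (e i) + (b * S Y Z) * ⟪e i, e i⟫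
            - b * (S (e i) Z * ⟪Y, e i⟫)
            - ((r / n) * (a / ((n:ℝ) - 1) + b) * ⟪Y, Z⟫) * ⟪e i, e i⟫
            + (r / n) * (a / ((n:ℝ) - 1) + b) * (⟪e i, Z⟫ * ⟪Y, e i⟫) := by
        intro i; rw [hP]; ring
      rw [Finset.sum_congr rfl (fun i _ => this i)]
      simp only [Finset.sum_add_distrib, Finset.sum_sub_distrib, ← Finset.mul_sum]
      rw [e2, e3, e4, ← hS]
      ring
    rw [hsum] at h0
    have h2 : ((a + ((n:ℝ) - 1) * b) * ((n:ℝ) - 1)) * (S Y Z * (n:ℝ) - r * ⟪Y, Z⟫) = 0 := by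
      field_simp at h0
      linear_combination ((n:ℝ) - 1) * h0
    have h3 := (mul_eq_zero.mp h2).resolve_left (mul_ne_zero hab hn1)
    have h4 : S Y Z * (n:ℝ) = r * ⟪Y, Z⟫ := by linarith
    field_simp
    linarith
  intro X Y Z W
  have h := hflat X Y Z W
  rw [hP, hS0 Y Z, hS0 X Z] at h
  have h2 : (a * (n:ℝ)) * (Rb X Y Z W * ((n:ℝ) * ((n:ℝ) - 1)) - r * (⟪Y, Z⟫ * ⟪X, W⟫ - ⟪X, Z⟫ * ⟪Y, W⟫)) = 0 := by
    field_simp at h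
    linear_combination (n:ℝ) * h
  have h3 := (mul_eq_zero.mp h2).resolve_left (mul_ne_zero ha hn0)
  have h4 : Rb X Y Z W * ((n:ℝ) * ((n:ℝ) - 1)) = r * (⟪Y, Z⟫ * ⟪X, W⟫ - ⟪X, Z⟫ * ⟪Y, W⟫) := by linarith
  rw [div_mul_eq_mul_div, eq_div_iff (mul_ne_zero hn0 hn1)]
  linarith
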